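/- Let d be a strictly positive probability distribution on {1,...,n} with non-increasing components, and let u_1, ..., u_q < n be pairwise distinct indices. Then the product N = P^d(u_q, n) ⋯ P^d(u_2, n) · P^d(u_1, n) satisfies: row u_1 of N has a 1 in column n and the value 1 - d_n/d_{u_1} in column u_1; for 1 < k ≤ q, row u_k has the value d_n/d_{u_{k-1}} in column u_{k-1} and the value 1 - d_n/d_{u_k} in column u_k; row n has the value d_n/d_{u_q} in column u_q; and all other entries of these rows are zero. -/
import Mathlib


open Matrix BigOperators

/-- The `d`-swap `P^d(i,j)`: the identity except on the pair `{i,j}`, where it has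
entries `(i,i) = 1 - d j / d i`, `(i,j) = 1`, `(j,i) = d j / d i`, `(j,j) = 0`. -/
noncomputable def Pswap {n : ℕ} (d : Fin n → ℝ) (i j : Fin n) : Matrix (Fin n) (Fin n) ℝ :=
  Matrix.of fun k l =>
    if k = i ∧ l = i then 1 - d j / d i
    else if k = i ∧ l = j then 1
    else if k = j ∧ l = i then d j / d i
    else if k = j ∧ l = j then 0
    else if k = l then 1 else 0

lemma Pswap_mul {n : ℕ} (d : Fin n → ℝ) (i j : Fin n) (hij : i ≠ j)
    (M : Matrix (Fin n) (Fin n) ℝ) (r l : Fin n) :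
    (Pswap d i j * M) r l =
      if r = i then (1 - d j / d i) * M i l + M j l
      else if r = j then (d j / d i) * M i l
      else M r l := by
  rw [mul_apply]
  by_cases hri : r = i
  · subst hri
    rw [if_pos rfl]
    have : ∀ m : Fin n, Pswap d r j r m * M m l =
        (if m = r then (1 - d j / d r) * M r l else 0) +
        (if m = j then M j l else 0) := by
      intro m
      simp only [Pswap, Matrix.of_apply]
      split_ifs <;> (try tauto) <;> subst_vars <;> simp_all <;> ring
    simp only [this, Finset.sum_add_distrib, Finset.sum_ite_eq', Finset.mem_univ, if_pos]
  · by_cases hrj : r = j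
    · subst hrj
      rw [if_neg hri, if_pos rfl]
      have : ∀ m : Fin n, Pswap d i r r m * M m l =
          (if m = i then (d r / d i) * M i l else 0) := by
        intro m
        simp only [Pswap, Matrix.of_apply]
        split_ifs <;> (try tauto) <;> subst_vars <;> simp_all <;> ring
      simp only [this, Finset.sum_ite_eq', Finset.mem_univ, if_pos]
    · rw [if_neg hri, if_neg hrj]
      have : ∀ m : Fin n, Pswap d i j r m * M m l =
          (if m = r then M r l else 0) := by
        intro m
        simp only [Pswap, Matrix.of_apply]
        split_ifs <;> (try tauto) <;> subst_vars <;> simp_all <;> ring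
      simp only [this, Finset.sum_ite_eq', Finset.mem_univ, if_pos]

lemma aux {n : ℕ} (d : Fin n → ℝ) (lastI : Fin n) :
    ∀ (q : ℕ) (u : Fin (q+1) → Fin n), Function.Injective u → (∀ k, u k ≠ lastI) →
    (∀ l, ((List.ofFn fun k : Fin (q+1) => Pswap d (u k) lastI).reverse).prod (u 0) l =
      if l = lastI then 1 else if l = u 0 then 1 - d lastI / d (u 0) else 0) ∧
    (∀ k : Fin (q+1), 0 < k.val →
      ∀ l, ((List.ofFn fun k : Fin (q+1) => Pswap d (u k) lastI).reverse).prod (u k) l =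
        if l = u k then 1 - d lastI / d (u k)
        else if l = u ⟨k.val - 1, by omega⟩ then d lastI / d (u ⟨k.val - 1, by omega⟩) else 0) ∧
    (∀ l, ((List.ofFn fun k : Fin (q+1) => Pswap d (u k) lastI).reverse).prod lastI l =
      if l = u (Fin.last q) then d lastI / d (u (Fin.last q)) else 0) ∧
    (∀ r, r ≠ lastI → (∀ k, r ≠ u k) →
      ∀ l, ((List.ofFn fun k : Fin (q+1) => Pswap d (u k) lastI).reverse).prod r l =
        if r = l then 1 else 0) := by
  intro q
  induction q with
  | zero =>
    intro u hinj hne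
    have h0 : u 0 ≠ lastI := hne 0
    simp only [List.ofFn_succ, List.ofFn_zero, List.reverse_cons, List.reverse_nil,
      List.nil_append, List.prod_cons, List.prod_nil, mul_one]
    refine ⟨?_, ?_, ?_, ?_⟩
    · intro l
      simp only [Pswap, Matrix.of_apply]
      split_ifs <;> (try tauto) <;> subst_vars <;> simp_all
    · intro k hk; exact absurd hk (by omega)
    · intro l
      simp only [Pswap, Matrix.of_apply, Fin.last]
      split_ifs <;> (try tauto) <;> subst_vars <;> simp_all
    · intro r hr hru l
      have : r ≠ u 0 := hru 0
      simp only [Pswap, Matrix.of_apply]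
      split_ifs <;> (try tauto) <;> subst_vars <;> simp_all
  | succ q ih =>
    intro u hinj hne
    obtain ⟨ih1, ih2, ih3, ih4⟩ := ih (fun k => u k.castSucc)
      (fun a b hab => Fin.castSucc_injective _ (hinj hab)) (fun k => hne _)
    have hlist : (List.ofFn fun k : Fin (q+2) => Pswap d (u k) lastI).reverse.prod =
        Pswap d (u (Fin.last (q+1))) lastI *
          (List.ofFn fun k : Fin (q+1) => Pswap d (u k.castSucc) lastI).reverse.prod := by
      rw [List.ofFn_succ']
      simp [List.reverse_concat, List.prod_cons, Function.comp]
    set M := (List.ofFn fun k : Fin (q+1) => Pswap d (u k.castSucc) lastI).reverse.prod with hM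
    have hnelast : u (Fin.last (q+1)) ≠ lastI := hne _
    have hcs_ne : ∀ k : Fin (q+1), u k.castSucc ≠ u (Fin.last (q+1)) := by
      intro k h
      have h2 := hinj h
      have : (k.castSucc : Fin (q+2)).val = (Fin.last (q+1)).val := by rw [h2]
      simp at this; omega
    have key : ∀ r l, (List.ofFn fun k : Fin (q+2) => Pswap d (u k) lastI).reverse.prod r l =
        if r = u (Fin.last (q+1)) then
          (1 - d lastI / d (u (Fin.last (q+1)))) * M (u (Fin.last (q+1))) l + M lastI l
        else if r = lastI then (d lastI / d (u (Fin.last (q+1)))) * M (u (Fin.last (q+1))) l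
        else M r l := by
      intro r l
      rw [hlist]
      exact Pswap_mul d _ _ hnelast M r l
    have Mlastrow : ∀ l, M (u (Fin.last (q+1))) l =
        if u (Fin.last (q+1)) = l then 1 else 0 := by
      intro l
      exact ih4 _ hnelast (fun k => (hcs_ne k).symm) l
    refine ⟨?_, ?_, ?_, ?_⟩
    · intro l
      have h0last : (0 : Fin (q+2)) ≠ Fin.last (q+1) := by
        simp [Fin.ext_iff]
      rw [key, if_neg (fun h => h0last (hinj h)), if_neg (fun h => hne 0 h)]
      have h00 : (Fin.castSucc (0 : Fin (q+1))) = (0 : Fin (q+2)) := by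
        ext; simp
      have := ih1 l
      rw [h00] at this
      exact this
    · intro k hk l
      by_cases hkl : k = Fin.last (q+1)
      · subst hkl
        rw [key, if_pos rfl, Mlastrow, ih3]
        have hcast : ((Fin.last q).castSucc : Fin (q+2)) =
            ⟨(Fin.last (q+1)).val - 1, by omega⟩ := Fin.ext (by simp)
        rw [← hcast]
        have hne2 : u ((Fin.last q).castSucc) ≠ u (Fin.last (q+1)) := hcs_ne _
        by_cases h1 : l = u (Fin.last (q+1))
        · rw [if_pos h1.symm, if_pos h1, if_neg (fun h => hne2 (h.symm.trans h1))]
          ring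
        · rw [if_neg (fun h => h1 h.symm), if_neg h1]
          by_cases h2 : l = u ((Fin.last q).castSucc)
          · rw [if_pos h2]; ring
          · rw [if_neg h2]; ring
      · have hkv : k.val < q + 1 := by
          rcases lt_or_eq_of_le (Nat.lt_succ_iff.mp k.isLt) with h | h
          · exact h
          · exact absurd (Fin.ext h) hkl
        set j : Fin (q+1) := ⟨k.val, hkv⟩ with hj
        have hjc : j.castSucc = k := Fin.ext rfl
        rw [key, if_neg (by rw [← hjc]; exact hcs_ne j), if_neg (hne k)]
        have hthis := ih2 j hk l
        rw [hjc] at hthis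
        have hcast2 : ((⟨j.val - 1, by omega⟩ : Fin (q+1)).castSucc : Fin (q+2)) =
            ⟨k.val - 1, by omega⟩ := Fin.ext rfl
        rw [hcast2] at hthis
        exact hthis
    · intro l
      rw [key, if_neg (fun h => hnelast h.symm), if_pos rfl, Mlastrow]
      by_cases h1 : l = u (Fin.last (q+1))
      · rw [if_pos h1.symm, if_pos h1]; ring
      · rw [if_neg (fun h => h1 h.symm), if_neg h1]; ring
    · intro r hr hru l
      rw [key, if_neg (hru _), if_neg hr]
      exact ih4 r hr (fun k => hru _) l

/-- structure of the rows of the product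
`N = P^d(u_q, n) ⋯ P^d(u_1, n)` of `d`-swaps with the last level, for pairwise
distinct indices `u_1, …, u_q < n` (here 0-indexed, with `u 0` acting first). -/
theorem stmt17 (n q : ℕ) (hn : 2 ≤ n) (hq : 1 ≤ q) (d : Fin n → ℝ)
    (hpos : ∀ i, 0 < d i) (hsum : ∑ i, d i = 1)
    (hmono : ∀ i j : Fin n, i ≤ j → d j ≤ d i)
    (u : Fin q → Fin n) (hinj : Function.Injective u)
    (hu : ∀ k, (u k).val < n - 1) :
    let lastI : Fin n := ⟨n - 1, by omega⟩
    let N : Matrix (Fin n) (Fin n) ℝ :=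
      ((List.ofFn fun k : Fin q => Pswap d (u k) lastI).reverse).prod
    (N (u ⟨0, hq⟩) lastI = 1) ∧
    (N (u ⟨0, hq⟩) (u ⟨0, hq⟩) = 1 - d lastI / d (u ⟨0, hq⟩)) ∧
    (∀ l, l ≠ lastI → l ≠ u ⟨0, hq⟩ → N (u ⟨0, hq⟩) l = 0) ∧
    (∀ k : Fin q, 0 < k.val →
      N (u k) (u ⟨k.val - 1, lt_of_le_of_lt (Nat.sub_le _ _) k.isLt⟩) =
          d lastI / d (u ⟨k.val - 1, lt_of_le_of_lt (Nat.sub_le _ _) k.isLt⟩) ∧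
      N (u k) (u k) = 1 - d lastI / d (u k) ∧
      ∀ l, l ≠ u k → l ≠ u ⟨k.val - 1, lt_of_le_of_lt (Nat.sub_le _ _) k.isLt⟩ →
        N (u k) l = 0) ∧
    (N lastI (u ⟨q - 1, by omega⟩) = d lastI / d (u ⟨q - 1, by omega⟩)) ∧
    (∀ l, l ≠ u ⟨q - 1, by omega⟩ → N lastI l = 0) ∧
    (∀ r : Fin n, r ≠ lastI → (∀ k, r ≠ u k) →
      ∀ l, N r l = if r = l then 1 else 0) := by
  obtain _ | q' := q
  · exact absurd hq (by omega)
  intro lastI N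
  have hneL : ∀ k : Fin (q'+1), u k ≠ lastI := by
    intro k h
    have h2 := hu k
    rw [h] at h2
    exact absurd (show n - 1 < n - 1 from h2) (by omega)
  obtain ⟨a1, a2, a3, a4⟩ := aux d lastI q' u hinj hneL
  have h0 : (⟨0, hq⟩ : Fin (q'+1)) = 0 := by rfl
  have hL : (Fin.last q' : Fin (q'+1)) = ⟨q'+1-1, by omega⟩ := by ext; simp
  refine ⟨?_, ?_, ?_, ?_, ?_, ?_, ?_⟩
  · rw [h0]
    have := a1 lastI
    rw [if_pos rfl] at this
    exact this
  · rw [h0]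
    have := a1 (u 0)
    rw [if_neg (hneL 0), if_pos rfl] at this
    exact this
  · intro l hl hl0
    rw [h0] at hl0 ⊢
    have := a1 l
    rw [if_neg hl, if_neg hl0] at this
    exact this
  · intro k hk
    have hkm : (⟨k.val - 1, lt_of_le_of_lt (Nat.sub_le _ _) k.isLt⟩ : Fin (q'+1)) ≠ k := by
      intro h
      have hv : k.val - 1 = k.val := congrArg Fin.val h
      omega
    refine ⟨?_, ?_, ?_⟩
    · have := a2 k hk (u ⟨k.val - 1, lt_of_le_of_lt (Nat.sub_le _ _) k.isLt⟩)
      rw [if_neg (fun h => hkm (hinj h)), if_pos rfl] at this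
      exact this
    · have := a2 k hk (u k)
      rw [if_pos rfl] at this
      exact this
    · intro l h1 h2
      have := a2 k hk l
      rw [if_neg h1, if_neg h2] at this
      exact this
  · have := a3 (u (Fin.last q'))
    rw [if_pos rfl] at this
    rw [← hL]
    exact this
  · intro l hl
    rw [← hL] at hl
    have := a3 l
    rw [if_neg hl] at this
    exact this
  · exact a4
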